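/- Let t be an n×m matrix of execution times with all entries strictly positive, where n ≥ 1 and m ≥ 1. If α is a fractional allocation attaining the minimum fractional makespan μ(t), then the workload is fully balanced among all machines: Σ_j α_{ij}·t_{ij} = μ(t) for every machine i. -/

import Mathlib

open Finset

/-- `α` is a fractional allocation of `m` tasks to `n` machines: all fractions lie
in `[0,1]` and each task is allocated entirely. -/
def IsFracAlloc {n m : ℕ} (α : Fin n → Fin m → ℝ) : Prop :=
  (∀ i j, 0 ≤ α i j ∧ α i j ≤ 1) ∧ ∀ j, ∑ i, α i j = 1

/-- The load of machine `i` under allocation `α` and execution times `t`. -/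
noncomputable def load {n m : ℕ} (α t : Fin n → Fin m → ℝ) (i : Fin n) : ℝ :=
  ∑ j, α i j * t i j

/-- The fractional makespan of the allocation `α` for execution times `t`:
the maximum load over machines. -/
noncomputable def fracMakespan {n m : ℕ} (α t : Fin n → Fin m → ℝ) : ℝ :=
  ⨆ i : Fin n, load α t i

/-- `μ t`: the minimum fractional makespan over all fractional allocations (the
value of the LP relaxation of the scheduling problem). -/
noncomputable def mu {n m : ℕ} (t : Fin n → Fin m → ℝ) : ℝ :=
  ⨅ α : {α : Fin n → Fin m → ℝ // IsFracAlloc α}, fracMakespan α.1 t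

lemma load_nonneg' {n m : ℕ} {α t : Fin n → Fin m → ℝ} (hα : IsFracAlloc α)
    (ht : ∀ i j, 0 < t i j) (i : Fin n) : 0 ≤ load α t i :=
  Finset.sum_nonneg fun j _ => mul_nonneg (hα.1 i j).1 (ht i j).le

lemma load_le_fracMakespan' {n m : ℕ} (α t : Fin n → Fin m → ℝ) (i : Fin n) :
    load α t i ≤ fracMakespan α t :=
  le_ciSup (Set.Finite.bddAbove (Set.finite_range _)) i

lemma mu_le' {n m : ℕ} (hn : 1 ≤ n) (t : Fin n → Fin m → ℝ) (ht : ∀ i j, 0 < t i j)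
    {β : Fin n → Fin m → ℝ} (hβ : IsFracAlloc β) : mu t ≤ fracMakespan β t := by
  have hne : Nonempty (Fin n) := ⟨⟨0, hn⟩⟩
  exact ciInf_le ⟨0, by
    rintro x ⟨γ, rfl⟩
    calc (0:ℝ) ≤ load γ.1 t (Classical.arbitrary _) := load_nonneg' γ.2 ht _
      _ ≤ fracMakespan γ.1 t := load_le_fracMakespan' _ _ _⟩
    (⟨β, hβ⟩ : {α : Fin n → Fin m → ℝ // IsFracAlloc α})

/-- For strictly positive execution times (`n, m ≥ 1`), any fractional allocation
attaining the minimum fractional makespan `μ t` is fully balanced: every machine's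
load equals `μ t`. -/
theorem optimal_fractional_allocation_balanced
    {n m : ℕ} (hn : 1 ≤ n) (hm : 1 ≤ m)
    (t : Fin n → Fin m → ℝ) (ht : ∀ i j, 0 < t i j)
    (α : Fin n → Fin m → ℝ) (hα : IsFracAlloc α)
    (hopt : fracMakespan α t = mu t) :
    ∀ i : Fin n, load α t i = mu t := by
  intro i
  by_contra hne
  have hFn : Nonempty (Fin n) := ⟨⟨0, hn⟩⟩
  have hFm : Nonempty (Fin m) := ⟨⟨0, hm⟩⟩
  set M := mu t with hMdef
  have hLle : load α t i ≤ M := hopt ▸ load_le_fracMakespan' α t i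
  have hL : load α t i < M := lt_of_le_of_ne hLle hne
  set L := load α t i with hLdef
  have hL0 : 0 ≤ L := load_nonneg' hα ht i
  have hM0 : 0 < M := lt_of_le_of_lt hL0 hL
  set T := ∑ j, t i j with hTdef
  have hT0 : 0 < T := Finset.sum_pos (fun j _ => ht i j) ⟨Classical.arbitrary _, mem_univ _⟩
  have hden : (0:ℝ) < 2 * (M - L + T) := by linarith
  set ε : ℝ := (M - L) / (2 * (M - L + T)) with hεdef
  have hε0 : 0 < ε := div_pos (by linarith) hden
  have hε1 : ε < 1 := by rw [hεdef, div_lt_one hden]; linarith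
  have hεkey : ε * (M - L + T) = (M - L) / 2 := by
    have hne' : M - L + T ≠ 0 := by linarith
    rw [hεdef, div_mul_eq_mul_div, mul_div_mul_right _ _ hne']
  have hεTL : ε * (T - L) ≤ (M - L) / 2 := by
    have h1 : ε * (T - L) ≤ ε * (M - L + T) :=
      mul_le_mul_of_nonneg_left (by linarith) hε0.le
    linarith
  set β : Fin n → Fin m → ℝ :=
    fun i' j => (1 - ε) * α i' j + ε * (if i' = i then 1 else 0) with hβdef
  have hβ : IsFracAlloc β := by
    constructor
    · intro i' j
      constructor
      · apply add_nonneg (mul_nonneg (by linarith) (hα.1 i' j).1)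
        apply mul_nonneg hε0.le
        split_ifs <;> norm_num
      · have h1 := (hα.1 i' j).2
        have h0 := (hα.1 i' j).1
        simp only [hβdef]
        split_ifs <;> nlinarith
    · intro j
      simp only [hβdef]
      rw [Finset.sum_add_distrib, ← Finset.mul_sum, hα.2 j, ← Finset.mul_sum,
        Finset.sum_ite_eq' univ i (fun _ => (1:ℝ))]
      simp
  have hloadβ : ∀ i', load β t i'
      = (1 - ε) * load α t i' + ε * (if i' = i then T else 0) := by
    intro i'
    simp only [load, hβdef, add_mul, Finset.sum_add_distrib, mul_assoc, ← Finset.mul_sum]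
    congr 1
    by_cases h : i' = i
    · subst h; simp [hTdef]
    · simp [h]
  set δ : ℝ := min (ε * M) ((M - L) / 2) with hδdef
  have hδ0 : 0 < δ := lt_min (by positivity) (by linarith)
  have hub : ∀ i', load β t i' ≤ M - δ := by
    intro i'
    rw [hloadβ]
    by_cases h : i' = i
    · rw [if_pos h, h, ← hLdef]
      have hmin : δ ≤ (M - L) / 2 := min_le_right _ _
      nlinarith
    · rw [if_neg h, mul_zero, add_zero]
      have h1 : load α t i' ≤ M := hopt ▸ load_le_fracMakespan' α t i'
      have h2 : (1 - ε) * load α t i' ≤ (1 - ε) * M :=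
        mul_le_mul_of_nonneg_left h1 (by linarith)
      have hmin : δ ≤ ε * M := min_le_left _ _
      nlinarith
  have hmk : fracMakespan β t ≤ M - δ := ciSup_le hub
  have hle : M ≤ fracMakespan β t := mu_le' hn t ht hβ
  linarith
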